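/- Let λ ∈ X and let w ∈ W be such that wλ is dominant. Then in the extended affine braid group B_aff one has T_{t_λ} = T_{w⁻¹} · T_{t_{wλ}} · (T_{w⁻¹})⁻¹. (Since wλ is dominant, T_{t_{wλ}} is the element θ_{wλ} of the Bernstein presentation, so this is the identity T_{t_λ} = T_{w⁻¹} θ_{wλ} (T_{w⁻¹})⁻¹.) -/

import Mathlib

open scoped BigOperators

/-- The multiplicative group structure on `AddAut A` (composition), as in the older Mathlib,
where `AddAut A` was a `Group`; current Mathlib makes it an `AddGroup` instead. -/
instance AddAut.groupOfComp (A : Type*) [Add A] : Group (AddAut A) where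
  mul g h := AddEquiv.trans h g
  one := AddEquiv.refl _
  inv := AddEquiv.symm
  mul_assoc _ _ _ := rfl
  one_mul _ := rfl
  mul_one _ := rfl
  inv_mul_cancel := AddEquiv.self_trans_symm

/-- The data of a finite reduced crystallographic root system `Φ`, with a chosen system of
positive roots `pos` cut out by a homomorphism `f : X → ℝ` not vanishing on any root, inside a
finitely generated free abelian group `X` (the weight lattice).  For each root `α` we record its
coroot `coroot α : X →+ ℤ` and the associated reflection `s α : x ↦ x - ⟨x, α∨⟩ • α`, an
automorphism of `X`.  The reflections preserve `Φ` and the coroots are equivariant for them. -/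
structure RootSystemData (X : Type*) [AddCommGroup X] [Module.Free ℤ X] [Module.Finite ℤ X] where
  /-- the (finite) set of roots -/
  Φ : Finset X
  /-- the set of positive roots -/
  pos : Finset X
  /-- the coroot attached to each root, as a homomorphism `X → ℤ` -/
  coroot : X → (X →+ ℤ)
  /-- the reflection attached to each root -/
  s : X → AddAut X
  /-- a homomorphism `X → ℝ` cutting out the positive roots -/
  f : X →+ ℝ
  f_ne : ∀ α ∈ Φ, f α ≠ 0
  pos_def : ∀ α, α ∈ pos ↔ α ∈ Φ ∧ 0 < f α
  pairing_self : ∀ α ∈ Φ, coroot α α = 2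
  s_apply : ∀ α ∈ Φ, ∀ x : X, s α x = x - coroot α x • α
  s_stable : ∀ α ∈ Φ, ∀ β ∈ Φ, s α β ∈ Φ
  reduced : ∀ α ∈ Φ, ∀ n : ℤ, n • α ∈ Φ → n = 1 ∨ n = -1
  coroot_equivariant : ∀ α ∈ Φ, ∀ β ∈ Φ, ∀ x : X, coroot (s α β) x = coroot β ((s α)⁻¹ x)

namespace RootSystemData

variable {X : Type*} [AddCommGroup X] [Module.Free ℤ X] [Module.Finite ℤ X] [DecidableEq X]
  (R : RootSystemData X)

/-- The Weyl group `W`, the subgroup of `Aut(X)` generated by the reflections `s_α`, `α ∈ Φ`. -/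
def W : Subgroup (AddAut X) := Subgroup.closure (R.s '' ↑R.Φ)

/-- A weight `λ` is dominant if `⟨λ, α∨⟩ ≥ 0` for all positive roots `α`. -/
def IsDominant (lam : X) : Prop := ∀ α ∈ R.pos, 0 ≤ R.coroot α lam

/-- `ℓ(u) = #{α ∈ Φ⁺ : uα ∈ −Φ⁺}` for `u` in the (finite) Weyl group. -/
def lenW (u : AddAut X) : ℕ := (R.pos.filter (fun α => -(u α) ∈ R.pos)).card

/-- The Iwahori–Matsumoto length of the element `u t_λ` of the extended affine Weyl group
`W_aff = W ⋉ X`: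
`ℓ(u t_λ) = Σ_{α ∈ Φ⁺ ∩ u⁻¹(Φ⁺)} |⟨λ, α∨⟩| + Σ_{α ∈ Φ⁺ ∩ u⁻¹(−Φ⁺)} |1 + ⟨λ, α∨⟩|`. -/
def lenAff (u : AddAut X) (lam : X) : ℕ :=
  ∑ α ∈ R.pos.filter (fun α => u α ∈ R.pos), (R.coroot α lam).natAbs
    + ∑ α ∈ R.pos.filter (fun α => -(u α) ∈ R.pos), (1 + R.coroot α lam).natAbs

/-- The length of the translation `t_λ`: `ℓ(t_λ) = Σ_{α ∈ Φ⁺} |⟨λ, α∨⟩|`. -/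
def lenT (lam : X) : ℕ := ∑ α ∈ R.pos, (R.coroot α lam).natAbs

end RootSystemData

namespace RootSystemData

variable {X : Type*} [AddCommGroup X] [Module.Free ℤ X] [Module.Finite ℤ X] [DecidableEq X]
  (R : RootSystemData X)

/-- Elements of the extended affine Weyl group `W_aff = W ⋉ X`: the pair `(u, λ)` represents
the element `u t_λ` (every element of `W_aff` is uniquely of this form). -/
abbrev WAff := R.W × X

/-- Multiplication in `W_aff`: `(u t_λ)(v t_μ) = (uv) t_{v⁻¹λ + μ}`, using
`t_λ v = v t_{v⁻¹ λ}` (equivalently `u t_λ u⁻¹ = t_{uλ}`). -/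
def waffMul (p q : R.WAff) : R.WAff :=
  (p.1 * q.1, ((q.1 : AddAut X))⁻¹ p.2 + q.2)

/-- The Iwahori–Matsumoto length of an element of `W_aff`. -/
def lenWAff (p : R.WAff) : ℕ := R.lenAff (p.1 : AddAut X) p.2

/-- The braid relations: `T_g T_h = T_{gh}` whenever `ℓ(gh) = ℓ(g) + ℓ(h)`. -/
def braidRels : Set (FreeGroup R.WAff) :=
  { r | ∃ g h : R.WAff, R.lenWAff (R.waffMul g h) = R.lenWAff g + R.lenWAff h ∧
      r = FreeGroup.of g * FreeGroup.of h * (FreeGroup.of (R.waffMul g h))⁻¹ }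

/-- The extended affine braid group `B_aff`: the group generated by the symbols `T_g`,
`g ∈ W_aff`, subject to the relations `T_g T_h = T_{gh}` whenever `ℓ(gh) = ℓ(g) + ℓ(h)`. -/
abbrev BraidAff := PresentedGroup R.braidRels

/-- The generator `T_g` of `B_aff` attached to `g ∈ W_aff`. -/
def T (g : R.WAff) : R.BraidAff := PresentedGroup.of g

end RootSystemData


namespace RootSystemData

variable {X : Type*} [AddCommGroup X] [Module.Free ℤ X] [Module.Finite ℤ X] [DecidableEq X]
  (R : RootSystemData X)

lemma s_s (α : X) (hα : α ∈ R.Φ) (x : X) : R.s α (R.s α x) = x := by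
  rw [R.s_apply α hα, R.s_apply α hα x, map_sub, map_zsmul, R.pairing_self α hα]
  rw [smul_eq_mul, mul_two]
  simp only [sub_smul, add_smul]
  abel

@[simp] lemma cmul_apply (g h : AddAut X) (x : X) : (g * h) x = g (h x) := rfl

@[simp] lemma cone_apply (x : X) : (1 : AddAut X) x = x := rfl

@[simp] lemma cinv_apply_self (g : AddAut X) (x : X) : g⁻¹ (g x) = x := g.symm_apply_apply x

@[simp] lemma capply_inv_self (g : AddAut X) (x : X) : g (g⁻¹ x) = x := g.apply_symm_apply x

lemma s_inv_apply (α : X) (hα : α ∈ R.Φ) (x : X) : (R.s α)⁻¹ x = R.s α x := by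
  have h := R.s_s α hα x
  calc (R.s α)⁻¹ x = (R.s α)⁻¹ (R.s α (R.s α x)) := by rw [h]
    _ = R.s α x := by simp

lemma w_key : ∀ u ∈ R.W, (∀ α ∈ R.Φ, u α ∈ R.Φ) ∧
    (∀ β ∈ R.Φ, ∀ x : X, R.coroot (u β) x = R.coroot β (u⁻¹ x)) := by
  have main : ∀ u ∈ R.W, ((∀ α ∈ R.Φ, u α ∈ R.Φ) ∧
      (∀ β ∈ R.Φ, ∀ x : X, R.coroot (u β) x = R.coroot β (u⁻¹ x))) ∧
      ((∀ α ∈ R.Φ, u⁻¹ α ∈ R.Φ) ∧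
      (∀ β ∈ R.Φ, ∀ x : X, R.coroot (u⁻¹ β) x = R.coroot β (u x))) := by
    intro u hu
    induction hu using Subgroup.closure_induction with
    | mem g hg =>
      obtain ⟨α, hα, rfl⟩ := hg
      refine ⟨⟨fun β hβ => R.s_stable α hα β hβ, fun β hβ x => R.coroot_equivariant α hα β hβ x⟩,
        ⟨fun β hβ => ?_, fun β hβ x => ?_⟩⟩
      · rw [R.s_inv_apply α hα]; exact R.s_stable α hα β hβ
      · rw [R.s_inv_apply α hα β, R.coroot_equivariant α hα β hβ, R.s_inv_apply α hα x]
    | one => simp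
    | mul g h hg hh ihg ihh =>
      obtain ⟨⟨hg1, hg2⟩, ⟨hg3, hg4⟩⟩ := ihg
      obtain ⟨⟨hh1, hh2⟩, ⟨hh3, hh4⟩⟩ := ihh
      refine ⟨⟨fun α hα => ?_, fun β hβ x => ?_⟩, ⟨fun α hα => ?_, fun β hβ x => ?_⟩⟩
      · rw [cmul_apply]; exact hg1 _ (hh1 α hα)
      · rw [cmul_apply, hg2 _ (hh1 β hβ), hh2 β hβ, mul_inv_rev, cmul_apply]
      · rw [mul_inv_rev, cmul_apply]; exact hh3 _ (hg3 α hα)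
      · rw [mul_inv_rev, cmul_apply, hh4 _ (hg3 β hβ), hg4 β hβ, cmul_apply]
    | inv g hg ihg =>
      obtain ⟨⟨hg1, hg2⟩, ⟨hg3, hg4⟩⟩ := ihg
      exact ⟨⟨hg3, hg4⟩, by simpa using ⟨hg1, hg2⟩⟩
  exact fun u hu => (main u hu).1

lemma mem_Φ_w {u : AddAut X} (hu : u ∈ R.W) {α : X} (hα : α ∈ R.Φ) : u α ∈ R.Φ :=
  (R.w_key u hu).1 α hα

lemma coroot_w {u : AddAut X} (hu : u ∈ R.W) {β : X} (hβ : β ∈ R.Φ) (x : X) :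
    R.coroot (u β) x = R.coroot β (u⁻¹ x) := (R.w_key u hu).2 β hβ x

lemma s_self (α : X) (hα : α ∈ R.Φ) : R.s α α = -α := by
  rw [R.s_apply α hα, R.pairing_self α hα]; push_cast; rw [two_smul]; abel

lemma neg_mem_Φ {α : X} (hα : α ∈ R.Φ) : -α ∈ R.Φ := by
  have := R.s_stable α hα α hα
  rwa [R.s_self α hα] at this

lemma coroot_neg {α : X} (hα : α ∈ R.Φ) (x : X) : R.coroot (-α) x = -(R.coroot α x) := by
  have h := R.coroot_equivariant α hα α hα x
  rw [R.s_self α hα, R.s_inv_apply α hα x, R.s_apply α hα x, map_sub, map_zsmul,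
    R.pairing_self α hα] at h
  rw [h, smul_eq_mul]; ring

lemma pos_iff {α : X} (hα : α ∈ R.Φ) : α ∈ R.pos ↔ ¬ (-α ∈ R.pos) := by
  rw [R.pos_def, R.pos_def, map_neg]
  have h0 := R.f_ne α hα
  constructor
  · rintro ⟨-, h⟩ ⟨-, h'⟩; linarith
  · intro h
    refine ⟨hα, ?_⟩
    rcases lt_or_gt_of_ne h0 with h1 | h1
    · exact absurd ⟨R.neg_mem_Φ hα, by linarith⟩ h
    · exact h1

lemma mem_Φ_of_pos {α : X} (hα : α ∈ R.pos) : α ∈ R.Φ := ((R.pos_def α).1 hα).1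

/-- the full sum over `Φ` -/
def lenF (lam : X) : ℕ := ∑ α ∈ R.Φ, (R.coroot α lam).natAbs

lemma lenF_eq (lam : X) : R.lenF lam = 2 * R.lenT lam := by
  classical
  have hsplit : R.lenF lam
      = ∑ α ∈ R.Φ.filter (fun α => α ∈ R.pos), (R.coroot α lam).natAbs
        + ∑ α ∈ R.Φ.filter (fun α => ¬ α ∈ R.pos), (R.coroot α lam).natAbs :=
    (Finset.sum_filter_add_sum_filter_not _ _ _).symm
  have h1 : R.Φ.filter (fun α => α ∈ R.pos) = R.pos := by
    ext α
    simp only [Finset.mem_filter]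
    exact ⟨fun h => h.2, fun h => ⟨R.mem_Φ_of_pos h, h⟩⟩
  have h2 : ∑ α ∈ R.Φ.filter (fun α => ¬ α ∈ R.pos), (R.coroot α lam).natAbs
      = ∑ α ∈ R.pos, (R.coroot α lam).natAbs := by
    refine Finset.sum_nbij' (fun α => -α) (fun α => -α) ?_ ?_ ?_ ?_ ?_
    · intro α hα
      simp only [Finset.mem_filter] at hα
      have := (R.pos_iff hα.1).not_left.mp ?_
      · simpa using this
      · simpa using hα.2
    · intro α hα
      have hΦ := R.mem_Φ_of_pos hα
      simp only [Finset.mem_filter]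
      refine ⟨R.neg_mem_Φ hΦ, ?_⟩
      rw [R.pos_iff (R.neg_mem_Φ hΦ)]
      simpa using hα
    · intro α _; simp
    · intro α _; simp
    · intro α hα
      simp only [Finset.mem_filter] at hα
      rw [R.coroot_neg hα.1]
      simp
  rw [hsplit, h1, h2, lenT, two_mul]

lemma lenF_w {u : AddAut X} (hu : u ∈ R.W) (lam : X) : R.lenF (u lam) = R.lenF lam := by
  unfold lenF
  refine Finset.sum_nbij' (fun α => u⁻¹ α) (fun α => u α) ?_ ?_ ?_ ?_ ?_
  · intro α hα; exact R.mem_Φ_w (inv_mem hu) hα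
  · intro α hα; exact R.mem_Φ_w hu hα
  · intro α _; simp
  · intro α _; simp
  · intro α hα
    have hβ : u⁻¹ α ∈ R.Φ := R.mem_Φ_w (inv_mem hu) hα
    have h := R.coroot_w hu hβ (u lam)
    simp only [capply_inv_self, cinv_apply_self] at h
    simp [h]

lemma lenT_w {u : AddAut X} (hu : u ∈ R.W) (lam : X) : R.lenT (u lam) = R.lenT lam := by
  have := R.lenF_eq (u lam)
  rw [R.lenF_w hu lam, R.lenF_eq lam] at this
  omega

lemma lenAff_zero (u : AddAut X) : R.lenAff u 0 = R.lenW u := by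
  unfold lenAff lenW
  simp [Finset.sum_const]

lemma lenAff_one (lam : X) : R.lenAff 1 lam = R.lenT lam := by
  unfold lenAff lenT
  have h1 : R.pos.filter (fun α => (1 : AddAut X) α ∈ R.pos) = R.pos := by
    refine Finset.filter_true_of_mem fun α hα => ?_
    simpa using hα
  have h2 : R.pos.filter (fun α => -((1 : AddAut X) α) ∈ R.pos) = ∅ := by
    refine Finset.filter_false_of_mem fun α hα => ?_
    have := (R.pos_iff (R.mem_Φ_of_pos hα)).mp hα
    simpa using this
  rw [h1, h2]
  simp

lemma lenAff_dominant {u : AddAut X} (hu : u ∈ R.W) {mu : X} (hdom : R.IsDominant mu) :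
    R.lenAff u mu = R.lenT mu + R.lenW u := by
  unfold lenAff lenW lenT
  have hB : R.pos.filter (fun α => -(u α) ∈ R.pos)
      = R.pos.filter (fun α => ¬ (u α ∈ R.pos)) := by
    refine Finset.filter_congr fun α hα => ?_
    have huα : u α ∈ R.Φ := R.mem_Φ_w hu (R.mem_Φ_of_pos hα)
    rw [R.pos_iff (R.neg_mem_Φ huα), neg_neg]
  rw [hB]
  have hstep : ∑ α ∈ R.pos.filter (fun α => ¬ (u α ∈ R.pos)), (1 + R.coroot α mu).natAbs
      = ∑ α ∈ R.pos.filter (fun α => ¬ (u α ∈ R.pos)),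
          ((R.coroot α mu).natAbs + 1) := by
    refine Finset.sum_congr rfl fun α hα => ?_
    have := hdom α (Finset.mem_filter.mp hα).1
    omega
  rw [hstep, Finset.sum_add_distrib, Finset.sum_const, smul_eq_mul, mul_one]
  have := Finset.sum_filter_add_sum_filter_not R.pos (fun α => u α ∈ R.pos)
    (fun α => (R.coroot α mu).natAbs)
  omega

lemma T_mul (g h : R.WAff)
    (hlen : R.lenWAff (R.waffMul g h) = R.lenWAff g + R.lenWAff h) :
    R.T g * R.T h = R.T (R.waffMul g h) := by
  have hmem : FreeGroup.of g * FreeGroup.of h * (FreeGroup.of (R.waffMul g h))⁻¹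
      ∈ Subgroup.normalClosure R.braidRels :=
    Subgroup.subset_normalClosure ⟨g, h, hlen, rfl⟩
  have h1 : (QuotientGroup.mk (FreeGroup.of g * FreeGroup.of h *
      (FreeGroup.of (R.waffMul g h))⁻¹) : R.BraidAff) = 1 :=
    (QuotientGroup.eq_one_iff _).mpr hmem
  rw [QuotientGroup.mk_mul, QuotientGroup.mk_mul, QuotientGroup.mk_inv] at h1
  have : R.T g * R.T h * (R.T (R.waffMul g h))⁻¹ = 1 := h1
  group at this ⊢
  exact mul_inv_eq_one.mp this

end RootSystemData

/-- Let `λ ∈ X` and let `w ∈ W` be such that `wλ` is dominant.  Then in the extended affine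
braid group `B_aff` one has `T_{t_λ} = T_{w⁻¹} · T_{t_{wλ}} · (T_{w⁻¹})⁻¹` (since `wλ` is
dominant, `T_{t_{wλ}}` is the element `θ_{wλ}` of the Bernstein presentation). -/
theorem T_t_lambda_conj
    {X : Type*} [AddCommGroup X] [Module.Free ℤ X] [Module.Finite ℤ X] [DecidableEq X]
    (R : RootSystemData X) (lam : X) (w : R.W)
    (hdom : R.IsDominant ((w : AddAut X) lam)) :
    R.T (1, lam) = R.T (w⁻¹, (0 : X)) * R.T (1, (w : AddAut X) lam) * (R.T (w⁻¹, (0 : X)))⁻¹ := by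
  classical
  set u : AddAut X := (w : AddAut X) with hu
  have huW : u ∈ R.W := w.2
  have huiW : u⁻¹ ∈ R.W := inv_mem huW
  have hcoe : ((w⁻¹ : R.W) : AddAut X) = u⁻¹ := rfl
  have hlen1 : R.lenWAff (R.waffMul (w⁻¹, (0 : X)) (1, u lam))
      = R.lenWAff (w⁻¹, (0 : X)) + R.lenWAff (1, u lam) := by
    show R.lenAff ((w⁻¹ * 1 : R.W) : AddAut X) (((1 : R.W) : AddAut X)⁻¹ 0 + u lam)
      = R.lenAff u⁻¹ 0 + R.lenAff 1 (u lam)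
    simp only [mul_one, OneMemClass.coe_one, inv_one, RootSystemData.cone_apply, zero_add, hcoe]
    rw [R.lenAff_zero, R.lenAff_one, R.lenAff_dominant huiW hdom]
    omega
  have hlen2 : R.lenWAff (R.waffMul (1, lam) (w⁻¹, (0 : X)))
      = R.lenWAff (1, lam) + R.lenWAff (w⁻¹, (0 : X)) := by
    show R.lenAff ((1 * w⁻¹ : R.W) : AddAut X) (((w⁻¹ : R.W) : AddAut X)⁻¹ lam + 0)
      = R.lenAff 1 lam + R.lenAff u⁻¹ 0
    simp only [one_mul, hcoe, inv_inv, add_zero]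
    rw [R.lenAff_zero, R.lenAff_one, R.lenAff_dominant huiW hdom, ← R.lenT_w huW lam]
  have h1 := R.T_mul _ _ hlen1
  have h2 := R.T_mul _ _ hlen2
  have hm1 : R.waffMul (w⁻¹, (0 : X)) (1, u lam) = (w⁻¹, u lam) := by
    show (w⁻¹ * 1, ((1 : R.W) : AddAut X)⁻¹ 0 + u lam) = (w⁻¹, u lam)
    simp
  have hm2 : R.waffMul (1, lam) (w⁻¹, (0 : X)) = (w⁻¹, u lam) := by
    show (1 * w⁻¹, ((w⁻¹ : R.W) : AddAut X)⁻¹ lam + 0) = (w⁻¹, u lam)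
    rw [hcoe, inv_inv]
    simp
  rw [hm1] at h1
  rw [hm2] at h2
  rw [h1, ← h2]
  group
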